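/- Let N ≥ 1, let A be an N×N real matrix with nonnegative entries and zero diagonal whose associated digraph (edge from j to i iff A_{ij} > 0) is strongly connected, and let L = D − A be the Laplacian. Then 0 is a root of the characteristic polynomial of L of algebraic multiplicity exactly one. -/

import Mathlib

open Matrix Polynomial Finset

section Aux

variable {N : ℕ} {A : Matrix (Fin N) (Fin N) ℝ}

lemma lap_row (A : Matrix (Fin N) (Fin N) ℝ) (x : Fin N → ℝ) (i : Fin N) :
    ((Matrix.diagonal (fun i => ∑ j, A i j) - A) *ᵥ x) i
      = (∑ j, A i j) * x i - ∑ j, A i j * x j := by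
  simp only [Matrix.mulVec, dotProduct, Matrix.sub_apply, Matrix.diagonal_apply,
    sub_mul, Finset.sum_sub_distrib, Finset.sum_ite_eq, Finset.mem_univ, if_pos,
    ite_mul, zero_mul]

lemma lap_col (A : Matrix (Fin N) (Fin N) ℝ) (x : Fin N → ℝ) (j : Fin N) :
    ((Matrix.diagonal (fun i => ∑ j, A i j) - A)ᵀ *ᵥ x) j
      = (∑ m, A j m) * x j - ∑ k, A k j * x k := by
  simp only [Matrix.mulVec, dotProduct, Matrix.transpose_apply, Matrix.sub_apply,
    Matrix.diagonal_apply, sub_mul, Finset.sum_sub_distrib, ite_mul, zero_mul]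
  rw [Finset.sum_ite_eq' Finset.univ j (fun k => (∑ m, A k m) * x k)]
  simp

end Aux

section Aux2
variable {N : ℕ} {A : Matrix (Fin N) (Fin N) ℝ}

lemma ker_const (hnn : ∀ i j, 0 ≤ A i j)
    (hsc : ∀ i j : Fin N, Relation.ReflTransGen (fun a b => 0 < A b a) i j)
    {x : Fin N → ℝ}
    (hx : (Matrix.diagonal (fun i => ∑ j, A i j) - A) *ᵥ x = 0)
    (i j : Fin N) : x i = x j := by
  obtain ⟨a, -, ha⟩ := Finset.exists_max_image Finset.univ x ⟨i, Finset.mem_univ i⟩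
  have step : ∀ v, x v = x a → ∀ u, 0 < A v u → x u = x a := by
    intro v hv u hu
    have hrow : (∑ m, A v m) * x v - ∑ m, A v m * x m = 0 := by
      rw [← lap_row A x v, hx]; rfl
    have h0 : ∑ m, A v m * (x a - x m) = 0 := by
      have : ∑ m, A v m * (x a - x m) = (∑ m, A v m) * x a - ∑ m, A v m * x m := by
        simp [mul_sub, Finset.sum_sub_distrib, Finset.sum_mul]
      rw [this, ← hv]
      linarith [hrow]
    have hterm := (Finset.sum_eq_zero_iff_of_nonneg
      (fun u _ => mul_nonneg (hnn v u) (sub_nonneg.2 (ha u (Finset.mem_univ u))))).1 h0 u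
      (Finset.mem_univ u)
    rcases mul_eq_zero.1 hterm with h | h
    · exact absurd h (ne_of_gt hu)
    · linarith [sub_eq_zero.1 h]
  have key : ∀ b, x b = x a := by
    intro b
    refine Relation.ReflTransGen.head_induction_on (hsc b a) rfl ?_
    intro u c huc _ hc
    exact step c hc u huc
  rw [key i, key j]

end Aux2

section Aux3
variable {N : ℕ} {A : Matrix (Fin N) (Fin N) ℝ}

lemma exists_left_nonneg (hN : 1 ≤ N) (hnn : ∀ i j, 0 ≤ A i j)
    (hsc : ∀ i j : Fin N, Relation.ReflTransGen (fun a b => 0 < A b a) i j) :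
    ∃ p : Fin N → ℝ, (∀ k, 0 ≤ p k) ∧ p ≠ 0 ∧
      (Matrix.diagonal (fun i => ∑ j, A i j) - A)ᵀ *ᵥ p = 0 := by
  haveI : Nonempty (Fin N) := ⟨⟨0, hN⟩⟩
  have hone : (Matrix.diagonal (fun i => ∑ j, A i j) - A) *ᵥ (fun _ => (1:ℝ)) = 0 := by
    funext i; rw [lap_row]; simp
  have hdet : (Matrix.diagonal (fun i => ∑ j, A i j) - A).det = 0 := by
    rw [← Matrix.exists_mulVec_eq_zero_iff]
    refine ⟨_, ?_, hone⟩
    intro h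
    have := congrFun h ⟨0, hN⟩
    simp at this
  have hdetT : (Matrix.diagonal (fun i => ∑ j, A i j) - A)ᵀ.det = 0 := by
    rw [Matrix.det_transpose]; exact hdet
  obtain ⟨q, hq0, hq⟩ := Matrix.exists_mulVec_eq_zero_iff.mpr hdetT
  have hcolq : ∀ j, (∑ m, A j m) * q j = ∑ k, A k j * q k := by
    intro j
    have h1 := congrFun hq j
    rw [lap_col] at h1
    have h2 : (0 : Fin N → ℝ) j = 0 := rfl
    rw [h2] at h1
    linarith
  obtain ⟨j0, hj0⟩ := Function.ne_iff.1 hq0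
  have hj0' : q j0 ≠ 0 := by simpa using hj0
  set s : ℝ := if 0 ≤ q j0 then 1 else -1 with hs
  have hsabs : |s| = 1 := by
    rcases le_or_gt 0 (q j0) with h | h
    · simp [hs, h]
    · simp [hs, not_le.2 h]
  have hsne : s ≠ 0 := by
    rcases le_or_gt 0 (q j0) with h | h
    · simp [hs, h]
    · simp [hs, not_le.2 h]
  set p : Fin N → ℝ := fun k => s * q k with hp
  have hpq : p = s • q := by funext k; simp [hp]
  have hpj0 : 0 ≤ p j0 := by
    rcases le_or_gt 0 (q j0) with h | h
    · simp only [hp, hs, if_pos h]; linarith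
    · simp only [hp, hs, if_neg (not_le.2 h)]; linarith
  have hpne : p ≠ 0 := by
    intro h
    have := congrFun h j0
    simp only [hp, Pi.zero_apply, mul_eq_zero] at this
    tauto
  have hcol : ∀ j, (∑ m, A j m) * p j = ∑ k, A k j * p k := by
    intro j
    simp only [hp]
    rw [mul_left_comm, hcolq j, Finset.mul_sum]
    exact Finset.sum_congr rfl fun k _ => by ring
  have habs : ∀ j, (∑ m, A j m) * |p j| ≤ ∑ k, A k j * |p k| := by
    intro j
    have hd : 0 ≤ ∑ m, A j m := Finset.sum_nonneg fun m _ => hnn j m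
    calc (∑ m, A j m) * |p j| = |(∑ m, A j m) * p j| := by
          rw [abs_mul (∑ m, A j m) (p j), abs_of_nonneg hd]
      _ = |∑ k, A k j * p k| := by rw [hcol j]
      _ ≤ ∑ k, |A k j * p k| := Finset.abs_sum_le_sum_abs _ _
      _ = ∑ k, A k j * |p k| := by
          exact Finset.sum_congr rfl fun k _ => by
            rw [abs_mul (A k j) (p k), abs_of_nonneg (hnn k j)]
  have hsumeq : ∑ j, ((∑ k, A k j * |p k|) - (∑ m, A j m) * |p j|) = 0 := by
    rw [Finset.sum_sub_distrib, Finset.sum_comm]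
    simp only [← Finset.sum_mul]
    ring_nf
  have heq : ∀ j, ∑ k, A k j * |p k| = (∑ m, A j m) * |p j| := by
    intro j
    have := (Finset.sum_eq_zero_iff_of_nonneg
      (fun j _ => sub_nonneg.2 (habs j))).1 hsumeq j (Finset.mem_univ j)
    linarith
  have prop : ∀ b, 0 ≤ p b := by
    intro b
    induction hsc j0 b with
    | refl => exact hpj0
    | @tail c b hpath hedge ih =>
      have hzero : ∑ k, A k c * (|p k| - p k) = 0 := by
        have h3 : ∑ k, A k c * (|p k| - p k)
            = (∑ k, A k c * |p k|) - ∑ k, A k c * p k := by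
          simp [mul_sub, Finset.sum_sub_distrib]
        rw [h3, heq c, ← hcol c, abs_of_nonneg ih]
        ring
      have hterm := (Finset.sum_eq_zero_iff_of_nonneg
        (fun k _ => mul_nonneg (hnn k c) (sub_nonneg.2 (le_abs_self (p k))))).1 hzero b
        (Finset.mem_univ b)
      rcases mul_eq_zero.1 hterm with h | h
      · exact absurd h (ne_of_gt hedge)
      · have h4 : |p b| = p b := by linarith [sub_eq_zero.1 h]
        rw [← h4]; exact abs_nonneg _
  exact ⟨p, prop, hpne, by rw [hpq, Matrix.mulVec_smul, hq, smul_zero]⟩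

end Aux3


/-- For the Laplacian `L = D - A` of a strongly connected weighted
digraph (nonnegative adjacency matrix `A`, zero diagonal, edge from `j` to `i` iff
`A i j > 0`), `0` is a root of the characteristic polynomial of `L` of algebraic
multiplicity exactly one. -/
theorem laplacian_zero_root_multiplicity_one
    (N : ℕ) (hN : 1 ≤ N) (A : Matrix (Fin N) (Fin N) ℝ)
    (hnonneg : ∀ i j, 0 ≤ A i j) (hdiag : ∀ i, A i i = 0)
    (hsc : ∀ i j : Fin N, Relation.ReflTransGen (fun a b => 0 < A b a) i j)
    (L : Matrix (Fin N) (Fin N) ℝ)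
    (hL : L = Matrix.diagonal (fun i => ∑ j, A i j) - A) :
    Polynomial.rootMultiplicity 0 L.charpoly = 1 := by
  haveI : Nonempty (Fin N) := ⟨⟨0, hN⟩⟩
  subst hL
  set L : Matrix (Fin N) (Fin N) ℝ := Matrix.diagonal (fun i => ∑ j, A i j) - A with hLdef
  set φ : Module.End ℝ (Fin N → ℝ) := Matrix.toLin' L with hφ
  have hφapp : ∀ x, φ x = L *ᵥ x := fun x => Matrix.toLin'_apply L x
  have hone : L *ᵥ (fun _ => (1:ℝ)) = 0 := by
    funext i; rw [hLdef, lap_row]; simp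
  have honene : (fun _ => (1:ℝ)) ≠ (0 : Fin N → ℝ) := by
    intro h; have := congrFun h ⟨0, hN⟩; simp at this
  have hker : LinearMap.ker φ = Submodule.span ℝ {(fun _ => (1:ℝ))} := by
    ext x
    rw [LinearMap.mem_ker, Submodule.mem_span_singleton]
    constructor
    · intro hx
      refine ⟨x ⟨0, hN⟩, funext fun b => ?_⟩
      have hc := ker_const hnonneg hsc (x := x) (by rw [← hLdef, ← hφapp]; exact hx) b ⟨0, hN⟩
      simp [hc]
    · rintro ⟨a, rfl⟩
      rw [hφapp, Matrix.mulVec_smul, hone, smul_zero]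
  have h2 : ∀ x, φ (φ x) = 0 → φ x = 0 := by
    intro x hx
    obtain ⟨p, hpn, hpne, hpL⟩ := exists_left_nonneg hN hnonneg hsc
    rw [← hLdef] at hpL
    have hconst := ker_const hnonneg hsc (x := L *ᵥ x)
      (by rw [← hLdef, ← hφapp, ← hφapp]; exact hx)
    set c := (L *ᵥ x) ⟨0, hN⟩ with hcdef
    have hy : L *ᵥ x = fun _ => c := funext fun b => hconst b ⟨0, hN⟩
    have hdot : p ⬝ᵥ (L *ᵥ x) = 0 := by
      rw [Matrix.dotProduct_mulVec, ← Matrix.mulVec_transpose, hpL, zero_dotProduct]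
    obtain ⟨k0, hk0⟩ := Function.ne_iff.1 hpne
    have hk0' : p k0 ≠ 0 := by simpa using hk0
    have hppos : 0 < ∑ j, p j :=
      Finset.sum_pos' (fun j _ => hpn j)
        ⟨k0, Finset.mem_univ k0, lt_of_le_of_ne (hpn k0) (Ne.symm hk0')⟩
    have hc : c = 0 := by
      rw [hy] at hdot
      simp only [dotProduct, ← Finset.sum_mul] at hdot
      rcases mul_eq_zero.1 hdot with h | h
      · exact absurd h (ne_of_gt hppos)
      · exact h
    rw [hφapp, hy, hc]
    rfl
  have hpow : ∀ (k : ℕ) (x : Fin N → ℝ), (φ ^ (k + 1)) x = 0 → φ x = 0 := by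
    intro k
    induction k with
    | zero => intro x hx; simpa using hx
    | succ k ih =>
      intro x hx
      have hx' : (φ ^ (k + 1)) (φ x) = 0 := by
        rw [← Module.End.mul_apply, ← pow_succ]
        exact hx
      exact h2 x (ih (φ x) hx')
  have hmax : φ.maxGenEigenspace 0 = LinearMap.ker φ := by
    ext x
    rw [Module.End.mem_maxGenEigenspace, LinearMap.mem_ker]
    simp only [zero_smul, sub_zero]
    constructor
    · rintro ⟨k, hk⟩
      cases k with
      | zero => simp only [pow_zero, Module.End.one_apply] at hk; rw [hk]; simp
      | succ k => exact hpow k x hk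
    · intro hx; exact ⟨1, by simpa using hx⟩
  have hrank : Module.finrank ℝ (φ.maxGenEigenspace 0) = 1 := by
    rw [hmax, hker]
    exact finrank_span_singleton honene
  have hcharp : L.charpoly = LinearMap.charpoly φ := by
    rw [← LinearMap.charpoly_toMatrix φ (Pi.basisFun ℝ (Fin N)),
      LinearMap.toMatrix_eq_toMatrix', hφ, LinearMap.toMatrix'_toLin']
  rw [Polynomial.rootMultiplicity_eq_natTrailingDegree', hcharp,
    ← LinearMap.finrank_maxGenEigenspace_zero_eq, hrank]
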